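/- Let N ≥ 2 be an integer, α > −1 and λ > 0 real numbers, and define U_{α,λ}(x) := log( c_N (α+1)^N λ^{N−1} / (1 + λ |x|^{N(α+1)/(N−1)})^N ) with c_N := N (N²/(N−1))^{N−1}. Then ∫_{ℝ^N} |x|^{Nα} e^{U_{α,λ}(x)} dx = c_N ω_N (α+1)^{N−1}, where ω_N denotes the Lebesgue volume of the unit ball in ℝ^N; in particular the total mass is independent of λ. -/

import Mathlib

open MeasureTheory Filter
open scoped RealInnerProductSpace Topology

noncomputable section

/-- The dimensional constant `c_N = N (N²/(N-1))^{N-1}`. -/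
def cconst (N : ℕ) : ℝ := N * ((N : ℝ) ^ 2 / ((N : ℝ) - 1)) ^ (N - 1)

/-- The explicit radial family
`U_{α,λ}(x) = log( c_N (α+1)^N λ^{N-1} / (1 + λ|x|^{N(α+1)/(N-1)})^N )`. -/
def Ulam (N : ℕ) (α lam : ℝ) (x : EuclideanSpace ℝ (Fin N)) : ℝ :=
  Real.log (cconst N * (α + 1) ^ N * lam ^ (N - 1) /
    (1 + lam * ‖x‖ ^ ((N : ℝ) * (α + 1) / ((N : ℝ) - 1))) ^ N)

lemma oneD (N : ℕ) (hN : 2 ≤ N) (p lam : ℝ) (hp : 0 < p) (hlam : 0 < lam) :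
    ∫ y in Set.Ioi (0:ℝ), y ^ (p * ((N:ℝ) - 1) - 1) / (1 + lam * y ^ p) ^ N
      = 1 / (((N:ℝ) - 1) * p * lam ^ (N - 1)) := by
  have hN1 : (0:ℝ) < (N:ℝ) - 1 := by
    have : (2:ℝ) ≤ N := by exact_mod_cast hN
    linarith
  set D : ℝ := ((N:ℝ) - 1) * p * lam ^ (N - 1) with hD
  have hDpos : 0 < D := by positivity
  set G : ℝ → ℝ := fun y => (1 / D) * (lam * y ^ p / (1 + lam * y ^ p)) ^ (N - 1) with hG
  have hden : ∀ y : ℝ, 0 ≤ y → (0:ℝ) < 1 + lam * y ^ p := by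
    intro y hy
    have : 0 ≤ lam * y ^ p := by positivity
    linarith
  -- derivative
  have hderiv : ∀ y ∈ Set.Ioi (0:ℝ),
      HasDerivAt G (y ^ (p * ((N:ℝ) - 1) - 1) / (1 + lam * y ^ p) ^ N) y := by
    intro y hy
    have hy0 : (0:ℝ) < y := hy
    have h1 : HasDerivAt (fun y : ℝ => y ^ p) (p * y ^ (p - 1)) y :=
      Real.hasDerivAt_rpow_const (Or.inl hy0.ne')
    have h2 : HasDerivAt (fun y : ℝ => lam * y ^ p) (lam * (p * y ^ (p - 1))) y :=
      h1.const_mul lam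
    have h3 : HasDerivAt (fun y : ℝ => 1 + lam * y ^ p) (lam * (p * y ^ (p - 1))) y :=
      h2.const_add 1
    have hdy : (1 + lam * y ^ p) ≠ 0 := (hden y hy0.le).ne'
    have h4 : HasDerivAt (fun y : ℝ => lam * y ^ p / (1 + lam * y ^ p))
        ((lam * (p * y ^ (p - 1)) * (1 + lam * y ^ p)
          - lam * y ^ p * (lam * (p * y ^ (p - 1)))) / (1 + lam * y ^ p) ^ 2) y :=
      h2.div h3 hdy
    have h5 := (h4.pow (N - 1)).const_mul (1 / D)
    refine h5.congr_deriv ?_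
    symm
    have e1 : lam * (p * y ^ (p - 1)) * (1 + lam * y ^ p)
        - lam * y ^ p * (lam * (p * y ^ (p - 1))) = lam * p * y ^ (p - 1) := by ring
    rw [e1]
    have hNN : N - 1 - 1 = N - 2 := by omega
    rw [hNN]
    rw [div_pow, mul_pow]
    have e2 : (y ^ p) ^ (N - 2) = y ^ (p * ((N:ℝ) - 2)) := by
      rw [← Real.rpow_natCast (y ^ p) (N - 2), ← Real.rpow_mul hy0.le]
      congr 1
      push_cast [Nat.cast_sub hN]
      ring
    rw [e2]
    have e3 : y ^ (p * ((N:ℝ) - 2)) * y ^ (p - 1) = y ^ (p * ((N:ℝ) - 1) - 1) := by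
      rw [← Real.rpow_add hy0]
      congr 1; ring
    have e4 : lam ^ (N - 2) * lam = lam ^ (N - 1) := by
      rw [← pow_succ]; congr 1; omega
    have e5 : (1 + lam * y ^ p) ^ (N - 2) * (1 + lam * y ^ p) ^ 2
        = (1 + lam * y ^ p) ^ N := by
      rw [← pow_add]; congr 1; omega
    have hd2 : ((1 + lam * y ^ p) ^ (N - 2) : ℝ) ≠ 0 := pow_ne_zero _ hdy
    have hdN : ((1 + lam * y ^ p) ^ N : ℝ) ≠ 0 := pow_ne_zero _ hdy
    have hd2' : ((1 + lam * y ^ p) ^ 2 : ℝ) ≠ 0 := pow_ne_zero _ hdy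
    have hlamN : lam ^ (N - 1) ≠ 0 := by positivity
    field_simp
    rw [← e5, ← e3, hD, ← e4]
    push_cast [Nat.cast_sub (by omega : 1 ≤ N)]
    ring
  -- nonneg
  have hnonneg : ∀ y ∈ Set.Ioi (0:ℝ),
      0 ≤ y ^ (p * ((N:ℝ) - 1) - 1) / (1 + lam * y ^ p) ^ N := by
    intro y hy
    have h := hden y (le_of_lt hy)
    exact div_nonneg (Real.rpow_nonneg (le_of_lt hy) _) (pow_nonneg h.le _)
  -- limit at infinity
  have hlim : Tendsto G atTop (𝓝 (1 / D)) := by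
    have h0 : Tendsto (fun y : ℝ => lam * y ^ p) atTop atTop :=
      (tendsto_rpow_atTop hp).const_mul_atTop hlam
    have h1 : Tendsto (fun y : ℝ => 1 + lam * y ^ p) atTop atTop :=
      tendsto_atTop_add_const_left _ 1 h0
    have h2 : Tendsto (fun y : ℝ => 1 / (1 + lam * y ^ p)) atTop (𝓝 0) :=
      h1.inv_tendsto_atTop.congr (fun y => by simp [one_div])
    have h3 : Tendsto (fun y : ℝ => lam * y ^ p / (1 + lam * y ^ p)) atTop (𝓝 1) := by
      have h4 : Tendsto (fun y : ℝ => 1 - 1 / (1 + lam * y ^ p)) atTop (𝓝 (1 - 0)) :=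
        tendsto_const_nhds.sub h2
      rw [sub_zero] at h4
      refine h4.congr' ?_
      filter_upwards [h1.eventually_gt_atTop 0] with y hy
      field_simp
      ring
    have h5 := ((h3.pow (N - 1)).const_mul (1 / D))
    simp only [one_pow, mul_one] at h5
    rw [hG]
    exact h5
  -- continuity at 0
  have hcont : ContinuousWithinAt G (Set.Ici 0) 0 := by
    have hrp : ContinuousAt (fun y : ℝ => y ^ p) 0 :=
      Real.continuousAt_rpow_const 0 p (Or.inr hp.le)
    have : ContinuousAt G 0 := by
      have hd : (1 + lam * (0:ℝ) ^ p) ≠ 0 := by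
        rw [Real.zero_rpow hp.ne']; norm_num
      exact (continuousAt_const.mul
        (((continuousAt_const.mul hrp).div
          (continuousAt_const.add (continuousAt_const.mul hrp)) hd).pow (N - 1)))
    exact this.continuousWithinAt
  have key := integral_Ioi_of_hasDerivAt_of_nonneg hcont hderiv hnonneg hlim
  rw [key]
  simp [hG, Real.zero_rpow hp.ne', zero_pow (show N - 1 ≠ 0 by omega)]

/-- Quantization of the total mass on the explicit radial family:
`∫_{ℝ^N} |x|^{Nα} e^{U_{α,λ}} dx = c_N ω_N (α+1)^{N-1}`, independently of `λ`. -/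
theorem statement19 (N : ℕ) (hN : 2 ≤ N) (α lam : ℝ) (hα : -1 < α) (hlam : 0 < lam) :
    ∫ x : EuclideanSpace ℝ (Fin N), ‖x‖ ^ ((N : ℝ) * α) * Real.exp (Ulam N α lam x)
      = cconst N * (volume (Metric.ball (0 : EuclideanSpace ℝ (Fin N)) 1)).toReal *
          (α + 1) ^ (N - 1) := by
  have hN1 : (0:ℝ) < (N:ℝ) - 1 := by
    have : (2:ℝ) ≤ N := by exact_mod_cast hN
    linarith
  have hNpos : (0:ℝ) < N := by linarith
  have hα1 : (0:ℝ) < α + 1 := by linarith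
  set p : ℝ := (N : ℝ) * (α + 1) / ((N : ℝ) - 1) with hpdef
  have hp : 0 < p := by positivity
  have hcN : 0 < cconst N := by
    unfold cconst
    positivity
  set C : ℝ := cconst N * (α + 1) ^ N * lam ^ (N - 1) with hC
  have hCpos : 0 < C := by positivity
  haveI : NeZero N := ⟨by omega⟩
  haveI : Nontrivial (EuclideanSpace ℝ (Fin N)) := by
    refine ⟨0, EuclideanSpace.single ⟨0, by omega⟩ 1, ?_⟩
    intro h
    have := congrArg (fun v : EuclideanSpace ℝ (Fin N) => v ⟨0, by omega⟩) h
    simp [EuclideanSpace.single] at this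
  have hpt : ∀ x : EuclideanSpace ℝ (Fin N),
      ‖x‖ ^ ((N : ℝ) * α) * Real.exp (Ulam N α lam x)
        = (fun r : ℝ => r ^ ((N : ℝ) * α) * (C / (1 + lam * r ^ p) ^ N)) ‖x‖ := by
    intro x
    have hd : (0:ℝ) < 1 + lam * ‖x‖ ^ p := by
      have : (0:ℝ) ≤ lam * ‖x‖ ^ p := by positivity
      linarith
    have : Real.exp (Ulam N α lam x) = C / (1 + lam * ‖x‖ ^ p) ^ N := by
      rw [Ulam, Real.exp_log (by positivity)]
    simp only [this]
  rw [show (∫ x : EuclideanSpace ℝ (Fin N), ‖x‖ ^ ((N : ℝ) * α) * Real.exp (Ulam N α lam x))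
      = ∫ x : EuclideanSpace ℝ (Fin N),
          (fun r : ℝ => r ^ ((N : ℝ) * α) * (C / (1 + lam * r ^ p) ^ N)) ‖x‖ from
    integral_congr_ae (Filter.Eventually.of_forall hpt)]
  rw [MeasureTheory.integral_fun_norm_addHaar volume
    (fun r : ℝ => r ^ ((N : ℝ) * α) * (C / (1 + lam * r ^ p) ^ N))]
  rw [finrank_euclideanSpace_fin]
  -- rewrite the 1D integrand
  have h1d : (∫ y in Set.Ioi (0:ℝ),
      y ^ (N - 1) • (y ^ ((N : ℝ) * α) * (C / (1 + lam * y ^ p) ^ N)))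
      = C * ∫ y in Set.Ioi (0:ℝ), y ^ (p * ((N:ℝ) - 1) - 1) / (1 + lam * y ^ p) ^ N := by
    rw [← integral_const_mul]
    refine setIntegral_congr_fun measurableSet_Ioi fun y hy => ?_
    have hy0 : (0:ℝ) < y := hy
    have e1 : (y : ℝ) ^ (N - 1) = y ^ (((N:ℝ) - 1) : ℝ) := by
      rw [← Real.rpow_natCast y (N - 1)]
      congr 1
      push_cast [Nat.cast_sub (by omega : 1 ≤ N)]
      ring
    rw [smul_eq_mul, e1, ← mul_assoc, ← Real.rpow_add hy0]
    have e2 : ((N:ℝ) - 1) + (N : ℝ) * α = p * ((N:ℝ) - 1) - 1 := by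
      rw [hpdef]
      field_simp
      ring
    rw [e2]
    ring
  rw [h1d, oneD N hN p lam hp hlam]
  rw [nsmul_eq_mul, smul_eq_mul, hC]
  have hωpos : 0 ≤ (volume (Metric.ball (0 : EuclideanSpace ℝ (Fin N)) 1)).toReal :=
    ENNReal.toReal_nonneg
  have hlamN : lam ^ (N - 1) ≠ 0 := by positivity
  have hαN : (α + 1) ^ N = (α + 1) ^ (N - 1) * (α + 1) := by
    rw [← pow_succ]; congr 1; omega
  rw [hαN, hpdef]
  field_simp
  ring
  rfl
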